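/- In a directed acyclic graph of moves, performing the log reduction and then the model reduction yields the subgraph induced on synchronous moves, with edges connecting synchronous moves joined by a path whose interior moves are all non-synchronous; the same subgraph results if the reductions are applied in the opposite order. -/

import Mathlib

/-- The reduction of a graph of moves `C` to the moves satisfying `P`:
there is an edge between two `P`-moves iff some `C`-path joins them all of whose
interior vertices fail `P`. -/
def red {M : Type*} (P : M → Prop) (C : M → M → Prop) (m₁ m₂ : M) : Prop :=
  P m₁ ∧ P m₂ ∧ ∃ l : List M, List.Chain' C (m₁ :: l ++ [m₂]) ∧ ∀ x ∈ l, ¬ P x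

/-- Concatenating the underlying `C`-paths of a `red Q C`-path. -/
lemma red_cat {M : Type*} {P Q : M → Prop} {C : M → M → Prop} {b : M} :
    ∀ (l : List M) (a : M), List.Chain (red Q C) a (l ++ [b]) → (∀ x ∈ l, ¬ P x) →
      Q a ∧ Q b ∧ ∃ l' : List M, List.Chain C a (l' ++ [b]) ∧ ∀ x ∈ l', ¬ (Q x ∧ P x) := by
  intro l
  induction l with
  | nil =>
    intro a h _
    simp only [List.Chain] at h
    rw [List.nil_append, List.chain_cons] at h
    obtain ⟨⟨hQa, hQb, l', hch, hl'⟩, -⟩ := h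
    exact ⟨hQa, hQb, l', hch, fun x hx hx' => hl' x hx hx'.1⟩
  | cons c l ih =>
    intro a h hP
    simp only [List.Chain] at h
    rw [List.cons_append, List.chain_cons] at h
    obtain ⟨⟨hQa, hQc, l₁, hch₁, hl₁⟩, hrest⟩ := h
    obtain ⟨-, hQb, l₂, hch₂, hl₂⟩ := ih c hrest (fun x hx => hP x (List.mem_cons_of_mem _ hx))
    refine ⟨hQa, hQb, l₁ ++ c :: l₂, ?_, ?_⟩
    · have : (l₁ ++ c :: l₂) ++ [b] = l₁ ++ c :: (l₂ ++ [b]) := by simp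
      simp only [List.Chain]
      rw [this, List.isChain_cons_split]
      exact ⟨hch₁, hch₂⟩
    · intro x hx
      rcases List.mem_append.1 hx with hx | hx
      · exact fun hx' => hl₁ x hx hx'.1
      · rcases List.mem_cons.1 hx with rfl | hx
        · exact fun hx' => hP x List.mem_cons_self hx'.2
        · exact hl₂ x hx

/-- Splitting a `C`-path at its `Q`-vertices yields a `red Q C`-path. -/
lemma red_split {M : Type*} {P Q : M → Prop} {C : M → M → Prop} {b : M} (hQb : Q b) :
    ∀ (l p : List M) (a : M), Q a → List.Chain C a (p ++ l ++ [b]) →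
      (∀ x ∈ p, ¬ Q x) → (∀ x ∈ l, ¬ (Q x ∧ P x)) →
      ∃ l' : List M, List.Chain (red Q C) a (l' ++ [b]) ∧ ∀ x ∈ l', Q x ∧ ¬ P x := by
  intro l
  induction l with
  | nil =>
    intro p a hQa h hp _
    refine ⟨[], ?_, by simp⟩
    simp only [List.Chain]
    rw [List.nil_append, List.chain_cons]
    refine ⟨⟨hQa, hQb, p, ?_, hp⟩, List.Chain.nil⟩
    exact (by simpa using h : List.Chain C a (p ++ [b]))
  | cons c l ih =>
    intro p a hQa h hp hl
    by_cases hQc : Q c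
    · have h' : List.Chain C a (p ++ c :: (l ++ [b])) := by simpa using h
      simp only [List.Chain] at h'
      rw [List.isChain_cons_split] at h'
      obtain ⟨h₁, h₂⟩ := h'
      obtain ⟨l', hch, hl'⟩ := ih [] c hQc (by simpa [List.Chain] using h₂) (by simp)
        (fun x hx => hl x (List.mem_cons_of_mem _ hx))
      refine ⟨c :: l', ?_, ?_⟩
      · simp only [List.Chain]
        rw [List.cons_append, List.chain_cons]
        exact ⟨⟨hQa, hQc, p, h₁, hp⟩, hch⟩
      · intro x hx
        rcases List.mem_cons.1 hx with rfl | hx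
        · exact ⟨hQc, fun hPx => hl x List.mem_cons_self ⟨hQc, hPx⟩⟩
        · exact hl' x hx
    · refine ih (p ++ [c]) a hQa (by simpa using h) ?_
        (fun x hx => hl x (List.mem_cons_of_mem _ hx))
      intro x hx
      rcases List.mem_append.1 hx with hx | hx
      · exact hp x hx
      · rcases List.mem_singleton.1 hx with rfl
        exact hQc

lemma red_red {M : Type*} (P Q : M → Prop) (C : M → M → Prop) :
    red P (red Q C) = red (fun m => Q m ∧ P m) C := by
  funext m₁ m₂
  apply propext
  constructor
  · rintro ⟨hP₁, hP₂, l, hch, hl⟩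
    have hch' : List.Chain (red Q C) m₁ (l ++ [m₂]) := hch
    obtain ⟨hQ₁, hQ₂, l', hch'', hl'⟩ := red_cat l m₁ hch' hl
    exact ⟨⟨hQ₁, hP₁⟩, ⟨hQ₂, hP₂⟩, l', hch'', hl'⟩
  · rintro ⟨⟨hQ₁, hP₁⟩, ⟨hQ₂, hP₂⟩, l, hch, hl⟩
    have hch' : List.Chain C m₁ (l ++ [m₂]) := hch
    obtain ⟨l', hch'', hl'⟩ :=
      red_split (P := P) hQ₂ l [] m₁ hQ₁ (by simpa using hch') (by simp) hl
    exact ⟨hP₁, hP₂, l', hch'', fun x hx => (hl' x hx).2⟩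

/-- In a DAG of moves, performing the log reduction (to moves with
`Plog`) and then the model reduction (to moves with `Pmod`) yields the subgraph
induced on synchronous moves (those with both `Plog` and `Pmod`), with edges
connecting synchronous moves joined by a `C`-path whose interior moves are all
non-synchronous; the same subgraph results in the opposite order. -/
theorem reductions_commute_to_sync_subgraph {M : Type*} (C : M → M → Prop)
    (Plog Pmod : M → Prop)
    (hdag : ∀ m : M, ¬ Relation.TransGen C m m) :
    red Pmod (red Plog C) = red (fun m => Plog m ∧ Pmod m) C ∧
      red Plog (red Pmod C) = red (fun m => Plog m ∧ Pmod m) C := by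
  constructor
  · exact red_red Pmod Plog C
  · rw [red_red Plog Pmod C,
      show (fun m => Pmod m ∧ Plog m) = (fun m => Plog m ∧ Pmod m) from
        funext fun m => propext and_comm]
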